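/- Let A ⊆ B ⊆ C be fields such that B and C are essentially smooth of relative dimension n as commutative A-algebras, and such that C is a finite field extension of B which is not separable. Then the canonical map Ω^n_{B/A} → Ω^n_{C/A}, induced in n-th exterior powers by the functoriality map Ω¹_{B/A} → Ω¹_{C/A} of Kähler differentials, is the zero map. -/

import Mathlib

universe u

open ExteriorAlgebra

/-- The wedge `d v 1 ∧ … ∧ d v n` of differentials of elements of `B`, as an element of the
`n`-th exterior power `Ω^n_{B/A} = ⋀[B]^n Ω[B⁄A]` of the module of Kähler differentials. -/
noncomputable def wedgeOfDifferentials (A B : Type u) [CommRing A] [CommRing B] [Algebra A B]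
    (n : ℕ) (v : Fin n → B) : ↥(⋀[B]^n (Ω[B⁄A])) :=
  ⟨ExteriorAlgebra.ιMulti B n (fun i => KaehlerDifferential.D A B (v i)),
    ExteriorAlgebra.ιMulti_range B n (Set.mem_range_self _)⟩

/-- The `n`-th exterior power of `Ω[B⁄A]` is spanned over `B` by wedges of differentials. -/
lemma mem_span_wedgeOfDifferentials (A B : Type u) [CommRing A] [CommRing B] [Algebra A B]
    (n : ℕ) (ω : ↥(⋀[B]^n (Ω[B⁄A]))) :
    ω ∈ Submodule.span B (Set.range (wedgeOfDifferentials A B n)) := by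
  classical
  have hx : (ω : ExteriorAlgebra B (Ω[B⁄A])) ∈
      Submodule.span B (Set.range (ιMulti B n)) := by
    rw [ExteriorAlgebra.ιMulti_span_fixedDegree]; exact ω.2
  have key : (ω : ExteriorAlgebra B (Ω[B⁄A])) ∈
      Submodule.span B (Set.range fun v : Fin n → B =>
        (ιMulti B n fun i => KaehlerDifferential.D A B (v i) :
          ExteriorAlgebra B (Ω[B⁄A]))) := by
    refine Submodule.span_le.2 ?_ hx
    rintro _ ⟨w, rfl⟩
    have hw : ∀ i, w i ∈ Submodule.span B (Set.range (KaehlerDifferential.D A B)) := by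
      intro i
      rw [KaehlerDifferential.span_range_derivation]
      trivial
    choose c hc using fun i => Finsupp.mem_span_range_iff_exists_finsupp.1 (hw i)
    have hw' : w = fun i => ∑ b ∈ (c i).support, c i b • KaehlerDifferential.D A B b := by
      funext i
      rw [← hc i]
      rfl
    rw [hw']
    have hsum := MultilinearMap.map_sum_finset (ιMulti B n).toMultilinearMap
      (fun i b => c i b • KaehlerDifferential.D A B b) (fun i => (c i).support)
    rw [show ((ιMulti B n) fun i => ∑ b ∈ (c i).support, c i b • KaehlerDifferential.D A B b)
        = (ιMulti B n).toMultilinearMap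
            (fun i => ∑ b ∈ (c i).support, c i b • KaehlerDifferential.D A B b) from rfl,
      hsum]
    refine Submodule.sum_mem _ fun r _ => ?_
    have hsmul := MultilinearMap.map_smul_univ (ιMulti B n).toMultilinearMap
      (fun i => c i (r i)) (fun i => KaehlerDifferential.D A B (r i))
    rw [hsmul]
    exact Submodule.smul_mem _ _ (Submodule.subset_span ⟨fun i => r i, rfl⟩)
  have h2 : ((⋀[B]^n (Ω[B⁄A])).subtype) ω ∈
      Submodule.map (⋀[B]^n (Ω[B⁄A])).subtype
        (Submodule.span B (Set.range (wedgeOfDifferentials A B n))) := by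
    rw [Submodule.map_span, ← Set.range_comp]
    exact key
  obtain ⟨y, hy, hyx⟩ := h2
  have : y = ω := Subtype.ext hyx
  rwa [this] at hy

/-- Let `A ⊆ B ⊆ C` be fields such that `B` and `C` are essentially smooth
of relative dimension `n` as commutative `A`-algebras, and such that `C` is a finite,
non-separable field extension of `B`.  Then the canonical map `Ω^n_{B/A} → Ω^n_{C/A}`
(the additive map which is semilinear over `B → C` and sends `db₁ ∧ … ∧ dbₙ` to
`db₁ ∧ … ∧ dbₙ` computed in `Ω^n_{C/A}`) is the zero map. -/
theorem statement10 (A B C : Type u) [Field A] [Field B] [Field C]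
    [Algebra A B] [Algebra A C] [Algebra B C] [IsScalarTower A B C]
    (n : ℕ)
    -- `B` is essentially smooth of relative dimension `n` over `A`
    [Algebra.EssFiniteType A B] [Algebra.FormallySmooth A B]
    [Module.Finite B (Ω[B⁄A])] (hrkB : Module.finrank B (Ω[B⁄A]) = n)
    -- `C` is essentially smooth of relative dimension `n` over `A`
    [Algebra.EssFiniteType A C] [Algebra.FormallySmooth A C]
    [Module.Finite C (Ω[C⁄A])] (hrkC : Module.finrank C (Ω[C⁄A]) = n)
    -- `C` is a finite non-separable field extension of `B`
    [Module.Finite B C] (hinsep : ¬ Algebra.IsSeparable B C)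
    -- `ι` is the canonical map `Ω^n_{B/A} → Ω^n_{C/A}`:
    (ι : ↥(⋀[B]^n (Ω[B⁄A])) →+ ↥(⋀[C]^n (Ω[C⁄A])))
    (hsemilin : ∀ (b : B) (ω : ↥(⋀[B]^n (Ω[B⁄A]))),
      ι (b • ω) = (algebraMap B C b) • ι ω)
    (hwedge : ∀ v : Fin n → B,
      ι (wedgeOfDifferentials A B n v) =
        wedgeOfDifferentials A C n (fun i => algebraMap B C (v i))) :
    ∀ ω : ↥(⋀[B]^n (Ω[B⁄A])), ι ω = 0 := by
  classical
  -- The `C`-span of the differentials of elements coming from `B`.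
  set N : Submodule C (Ω[C⁄A]) :=
    Submodule.span C (Set.range fun b : B => KaehlerDifferential.D A C (algebraMap B C b))
    with hNdef
  -- `N` is a proper subspace, since otherwise `Ω[C⁄B] = 0` and `C/B` would be separable.
  have hNne : N ≠ ⊤ := by
    intro htop
    apply hinsep
    have hφ : ∀ x : Ω[C⁄A], KaehlerDifferential.map A B C C x = 0 := by
      intro x
      have hx : x ∈ N := htop ▸ Submodule.mem_top
      refine Submodule.span_induction ?_ ?_ ?_ ?_ hx
      · rintro _ ⟨b, rfl⟩
        rw [KaehlerDifferential.map_D]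
        exact Derivation.map_algebraMap _ b
      · simp
      · intro x y _ _ hx hy
        rw [map_add, hx, hy, add_zero]
      · intro a x _ hx
        rw [map_smul, hx, smul_zero]
    have hsub : Subsingleton (Ω[C⁄B]) := by
      constructor
      intro x y
      obtain ⟨x', rfl⟩ := KaehlerDifferential.map_surjective A B C x
      obtain ⟨y', rfl⟩ := KaehlerDifferential.map_surjective A B C y
      rw [hφ, hφ]
    have hunr : Algebra.FormallyUnramified B C := ⟨hsub⟩
    exact (Algebra.FormallyUnramified.iff_isSeparable (K := B) C).mp hunr
  have hlt : Module.finrank C N < n := by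
    rw [← hrkC]
    exact Submodule.finrank_lt hNne
  -- All wedges of differentials of elements of `B`, computed in `Ω^n_{C/A}`, vanish.
  have hker : ∀ v : Fin n → B,
      wedgeOfDifferentials A C n (fun i => algebraMap B C (v i)) = 0 := by
    intro v
    apply Subtype.ext
    show (ιMulti C n fun i => KaehlerDifferential.D A C (algebraMap B C (v i))) = 0
    refine AlternatingMap.map_linearDependent (ιMulti C n) _ ?_
    intro hLI
    set w : Fin n → N := fun i =>
      ⟨KaehlerDifferential.D A C (algebraMap B C (v i)),
        Submodule.subset_span ⟨v i, rfl⟩⟩ with hwdef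
    have hLI' : LinearIndependent C w := LinearIndependent.of_comp N.subtype hLI
    have hcard := hLI'.fintype_card_le_finrank
    rw [Fintype.card_fin] at hcard
    omega
  -- Conclude by the spanning lemma.
  intro ω
  have hω := mem_span_wedgeOfDifferentials A B n ω
  refine Submodule.span_induction ?_ ?_ ?_ ?_ hω
  · rintro _ ⟨v, rfl⟩
    rw [hwedge v, hker v]
  · exact map_zero ι
  · intro x y _ _ hx hy
    rw [map_add, hx, hy, add_zero]
  · intro b x _ hx
    rw [hsemilin, hx, smul_zero]
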